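/- Let W be a countable collection of sets (Whitney cubes) in Ω, each Q ∈ W with a finite chain P(Q) ⊂ W and shadow S(Q) = ⋃{Q₁ ∈ W : Q ∈ P(Q₁)}. Suppose (a) |S(Q)| ≤ C₁ |Q|^{2β/(1+β)} for all Q ∈ W, and (b) sup_{Q₁∈W} ∑_{Q∈P(Q₁)} |Q|^ε ≤ C₂ for ε = (2β/((1+β)q) − 1/p*)·κ > 0, where p* = np/(n−pδ), κ = p/(p−1). Then for every measurable E ⊂ Ω, ∑_{Q∈W} |S(Q)∩E|^κ |Q|^{−κ/p*} ≤ C |E|^{κ(q−1)/q}, with C depending only on C₁, C₂, n, p, q, β, δ. -/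

import Mathlib

open MeasureTheory ENNReal

/-- Lemma 5.2: shadow summation estimate. Let `W` be a Whitney decomposition of `Ω`
with chains `P(Q)` and shadows `S(Q) = ⋃ {Q₁ : Q ∈ P(Q₁)}`. If
`|S(Q)| ≤ C₁ |Q|^{2β/(1+β)}` and `∑_{Q ∈ P(Q₁)} |Q|^ε ≤ C₂` uniformly, where
`ε = (2β/((1+β)q) − 1/p*)·κ > 0`, `κ = p/(p−1)`, `p* = np/(n−pδ)`, then for every
measurable `E ⊆ Ω`, `∑_Q |S(Q)∩E|^κ |Q|^{−κ/p*} ≤ C |E|^{κ(q−1)/q}`. -/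
theorem stmt_13 (n : ℕ) (hn : 2 ≤ n) (p q δ β : ℝ)
    (hδ : δ ∈ Set.Ioo (0:ℝ) 1) (hβ : β ∈ Set.Ioc (0:ℝ) 1)
    (hp1 : 1 < p) (hpn : p < n / δ) (hpq : p ≤ q)
    (ι : Type) [Countable ι]
    (Ω : Set (EuclideanSpace ℝ (Fin n))) (W : ι → Set (EuclideanSpace ℝ (Fin n)))
    (hWm : ∀ i, MeasurableSet (W i))
    (hWpos : ∀ i, 0 < volume (W i)) (hWfin : ∀ i, volume (W i) < ⊤)
    (hWdisj : Pairwise fun i j => volume (W i ∩ W j) = 0)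
    (hWcover : Ω = ⋃ i, W i)
    (P : ι → Finset ι)
    (S : ι → Set (EuclideanSpace ℝ (Fin n)))
    (hS : ∀ i, S i = ⋃ j ∈ {j | i ∈ P j}, W j)
    (C₁ C₂ : ℝ≥0∞) (hC₁ : C₁ ≠ ⊤) (hC₂ : C₂ ≠ ⊤)
    (hshadow : ∀ i, volume (S i) ≤ C₁ * volume (W i) ^ (2 * β / (1 + β)))
    (hε : 0 < (2 * β / ((1 + β) * q) - ((n : ℝ) - p * δ) / ((n : ℝ) * p)) * (p / (p - 1)))
    (hchain : ∀ j, ∑ i ∈ P j,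
        volume (W i) ^
          ((2 * β / ((1 + β) * q) - ((n : ℝ) - p * δ) / ((n : ℝ) * p)) * (p / (p - 1)))
      ≤ C₂) :
    ∃ C : ℝ≥0∞, C ≠ ⊤ ∧
      ∀ E : Set (EuclideanSpace ℝ (Fin n)), MeasurableSet E → E ⊆ Ω →
        ∑' i : ι, volume (S i ∩ E) ^ (p / (p - 1)) *
            volume (W i) ^ (-((p / (p - 1)) * (((n : ℝ) - p * δ) / ((n : ℝ) * p)))) ≤
          C * volume E ^ ((p / (p - 1)) * ((q - 1) / q)) := by
  classical
  obtain ⟨hδ0, hδ1⟩ := hδ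
  obtain ⟨hβ0, hβ1⟩ := hβ
  have hp0 : (0:ℝ) < p := by linarith
  have hq1 : (1:ℝ) < q := lt_of_lt_of_le hp1 hpq
  have hq0 : (0:ℝ) < q := by linarith
  have hpm : (0:ℝ) < p - 1 := by linarith
  have hn0 : (0:ℝ) < (n:ℝ) := by
    have : (0:ℕ) < n := by omega
    exact_mod_cast this
  have hnpδ : 0 < (n:ℝ) - p * δ := by
    have := (lt_div_iff₀ hδ0).mp hpn
    linarith
  set κ : ℝ := p / (p - 1) with hκ
  have hκ0 : 0 < κ := div_pos hp0 hpm
  set α : ℝ := ((n:ℝ) - p * δ) / ((n:ℝ) * p) with hα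
  have hα0 : 0 < α := div_pos hnpδ (by positivity)
  set ε : ℝ := (2 * β / ((1 + β) * q) - α) * κ with hεdef
  have h1β : (0:ℝ) < 1 + β := by linarith
  have hc0 : 0 ≤ κ / p - κ / q := by
    have : κ / q ≤ κ / p := div_le_div_of_nonneg_left hκ0.le hp0 hpq
    linarith
  have hκq0 : 0 < κ / q := div_pos hκ0 hq0
  have hsplit : κ = (κ / p - κ / q) + 1 + κ / q := by
    rw [hκ]; field_simp; ring
  have hEexp : (κ / p - κ / q) + 1 = κ * ((q - 1) / q) := by
    rw [hκ]; field_simp; ring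
  have hWexp : (2 * β / (1 + β)) * (κ / q) + (-(κ * α)) = ε := by
    rw [hεdef, hα, hκ]; field_simp; ring
  refine ⟨C₁ ^ (κ / q) * C₂ + 1, ?_, ?_⟩
  · exact ENNReal.add_ne_top.mpr
      ⟨ENNReal.mul_ne_top (ENNReal.rpow_ne_top_of_nonneg hκq0.le hC₁) hC₂, one_ne_top⟩
  intro E hE hEΩ
  -- sum of measures of W j ∩ E is at most |E|
  have hdisjsum : ∑' j, volume (W j ∩ E) ≤ volume E := by
    have hd : Pairwise (Function.onFun (MeasureTheory.AEDisjoint volume) fun j => W j ∩ E) := by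
      intro i j hij
      have hsub : (W i ∩ E) ∩ (W j ∩ E) ⊆ W i ∩ W j := fun x hx => ⟨hx.1.1, hx.2.1⟩
      exact measure_mono_null hsub (hWdisj hij)
    rw [← measure_iUnion₀ hd (fun j => ((hWm j).inter hE).nullMeasurableSet)]
    exact measure_mono (Set.iUnion_subset fun j => Set.inter_subset_right)
  -- pointwise bound for shadows
  have hSE : ∀ i, volume (S i ∩ E) ≤ ∑' j, (if i ∈ P j then volume (W j ∩ E) else 0) := by
    intro i
    have hset : S i ∩ E = ⋃ j, (if i ∈ P j then W j ∩ E else ∅) := by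
      rw [hS i]
      ext x
      simp only [Set.mem_inter_iff, Set.mem_iUnion, Set.mem_setOf_eq]
      constructor
      · rintro ⟨⟨j, hj, hx⟩, hxE⟩
        exact ⟨j, by simp [hj, hx, hxE]⟩
      · rintro ⟨j, hj⟩
        by_cases h : i ∈ P j
        · rw [if_pos h] at hj
          exact ⟨⟨j, h, hj.1⟩, hj.2⟩
        · rw [if_neg h] at hj
          exact absurd hj (Set.notMem_empty x)
    rw [hset]
    refine (measure_iUnion_le _).trans_eq ?_
    exact tsum_congr fun j => by split_ifs <;> simp
  -- the main chain sum estimate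
  have main : ∑' i, volume (W i) ^ ε * volume (S i ∩ E) ≤ C₂ * volume E := by
    calc ∑' i, volume (W i) ^ ε * volume (S i ∩ E)
        ≤ ∑' i, ∑' j, volume (W i) ^ ε * (if i ∈ P j then volume (W j ∩ E) else 0) := by
          refine ENNReal.tsum_le_tsum fun i => ?_
          rw [ENNReal.tsum_mul_left]
          exact mul_le_mul_right (hSE i) _
      _ = ∑' j, ∑' i, volume (W i) ^ ε * (if i ∈ P j then volume (W j ∩ E) else 0) :=
          ENNReal.tsum_comm
      _ = ∑' j, (∑ i ∈ P j, volume (W i) ^ ε) * volume (W j ∩ E) := by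
          refine tsum_congr fun j => ?_
          rw [show (fun i => volume (W i) ^ ε * (if i ∈ P j then volume (W j ∩ E) else 0))
              = fun i => if i ∈ P j then volume (W i) ^ ε * volume (W j ∩ E) else 0 from
              funext fun i => by split_ifs <;> simp,
            tsum_eq_sum (s := P j) (fun i hi => if_neg hi), Finset.sum_mul]
          exact Finset.sum_congr rfl fun i hi => if_pos hi
      _ ≤ ∑' j, C₂ * volume (W j ∩ E) :=
          ENNReal.tsum_le_tsum fun j => mul_le_mul_left (hchain j) _
      _ = C₂ * ∑' j, volume (W j ∩ E) := ENNReal.tsum_mul_left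
      _ ≤ C₂ * volume E := mul_le_mul_right hdisjsum _
  -- per-term bound
  have key : ∀ i, volume (S i ∩ E) ^ κ * volume (W i) ^ (-(κ * α)) ≤
      volume E ^ (κ / p - κ / q) * C₁ ^ (κ / q) * (volume (W i) ^ ε * volume (S i ∩ E)) := by
    intro i
    have hw0 : volume (W i) ≠ 0 := (hWpos i).ne'
    have hwt : volume (W i) ≠ ⊤ := (hWfin i).ne
    have h1 : volume (S i ∩ E) ^ κ
        = volume (S i ∩ E) ^ (κ / p - κ / q) * volume (S i ∩ E) * volume (S i ∩ E) ^ (κ / q) := by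
      conv_lhs => rw [hsplit]
      rw [ENNReal.rpow_add_of_nonneg _ _ (by linarith : (0:ℝ) ≤ (κ / p - κ / q) + 1) hκq0.le,
        ENNReal.rpow_add_of_nonneg _ _ hc0 zero_le_one, ENNReal.rpow_one]
    calc volume (S i ∩ E) ^ κ * volume (W i) ^ (-(κ * α))
        = volume (S i ∩ E) ^ (κ / p - κ / q) * volume (S i ∩ E) * volume (S i ∩ E) ^ (κ / q)
            * volume (W i) ^ (-(κ * α)) := by rw [h1]
      _ ≤ volume E ^ (κ / p - κ / q) * volume (S i ∩ E)
            * (C₁ * volume (W i) ^ (2 * β / (1 + β))) ^ (κ / q)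
            * volume (W i) ^ (-(κ * α)) := by
          gcongr
          · exact Set.inter_subset_right
          · exact (measure_mono Set.inter_subset_left).trans (hshadow i)
      _ = volume E ^ (κ / p - κ / q) * C₁ ^ (κ / q)
            * (volume (W i) ^ (2 * β / (1 + β) * (κ / q)) * volume (W i) ^ (-(κ * α))
               * volume (S i ∩ E)) := by
          rw [ENNReal.mul_rpow_of_nonneg _ _ hκq0.le, ← ENNReal.rpow_mul]; ring
      _ = volume E ^ (κ / p - κ / q) * C₁ ^ (κ / q) * (volume (W i) ^ ε * volume (S i ∩ E)) := by
          rw [← ENNReal.rpow_add _ _ hw0 hwt, hWexp]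
  calc ∑' i, volume (S i ∩ E) ^ κ * volume (W i) ^ (-(κ * α))
      ≤ ∑' i, volume E ^ (κ / p - κ / q) * C₁ ^ (κ / q) * (volume (W i) ^ ε * volume (S i ∩ E)) :=
        ENNReal.tsum_le_tsum key
    _ = volume E ^ (κ / p - κ / q) * C₁ ^ (κ / q) * ∑' i, volume (W i) ^ ε * volume (S i ∩ E) :=
        ENNReal.tsum_mul_left
    _ ≤ volume E ^ (κ / p - κ / q) * C₁ ^ (κ / q) * (C₂ * volume E) :=
        mul_le_mul_right main _
    _ = (C₁ ^ (κ / q) * C₂) * (volume E ^ (κ / p - κ / q) * volume E) := by ring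
    _ = (C₁ ^ (κ / q) * C₂) * volume E ^ (κ * ((q - 1) / q)) := by
        rw [← hEexp, ENNReal.rpow_add_of_nonneg _ _ hc0 zero_le_one, ENNReal.rpow_one]
    _ ≤ (C₁ ^ (κ / q) * C₂ + 1) * volume E ^ (κ * ((q - 1) / q)) :=
        mul_le_mul_left le_self_add _
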